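/- Let B be a C*-algebra and N ⊆ B a norm-closed linear subspace such that n m* p ∈ N for all n, m, p ∈ N (a ternary ring of operators). Then N equals the closed linear span of {n m* p : n, m, p ∈ N}. -/

import Mathlib

open scoped ContinuousMapZero

set_option maxHeartbeats 1000000 in
/-- A norm-closed linear subspace `N` of a C*-algebra `B` with `N N* N ⊆ N` (a ternary ring
of operators) equals the closed linear span of `{n m* p : n, m, p ∈ N}`. -/
theorem tro_eq_closedSpan_triple_products {B : Type*} [NonUnitalCStarAlgebra B]
    (N : Submodule ℂ B) (hNc : IsClosed (N : Set B))
    (hN : ∀ n ∈ N, ∀ m ∈ N, ∀ p ∈ N, n * star m * p ∈ N) :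
    (N : Set B) = closure (Submodule.span ℂ
      {x : B | ∃ n ∈ N, ∃ m ∈ N, ∃ p ∈ N, x = n * star m * p} : Set B) := by
  set S : Set B := {x : B | ∃ n ∈ N, ∃ m ∈ N, ∃ p ∈ N, x = n * star m * p} with hS
  apply Set.Subset.antisymm
  · intro n hn
    set a : B := star n * n with hA
    have ha : IsSelfAdjoint a := IsSelfAdjoint.star_mul_self n
    -- nonnegativity of the quasispectrum of `a = n* n`
    have hqs : ∀ x ∈ quasispectrum ℝ a, 0 ≤ x := by
      intro x hx
      rw [Unitization.quasispectrum_eq_spectrum_inr' ℝ ℂ a] at hx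
      rw [hA] at hx
      rw [Unitization.inr_mul, Unitization.inr_star] at hx
      exact spectrum_star_mul_self_nonneg x hx
    -- elements of the algebra generated by `a`, multiplied by elements of `N`, are in the span
    have L2 : ∀ y ∈ NonUnitalAlgebra.adjoin ℝ {a}, ∀ w ∈ N,
        w * y ∈ Submodule.span ℂ S ∧ w * y ∈ N := by
      intro y hy
      induction hy using NonUnitalAlgebra.adjoin_induction with
      | mem x hx =>
        intro w hw
        rw [Set.mem_singleton_iff] at hx
        subst hx
        refine ⟨Submodule.subset_span ⟨w, hw, n, hn, n, hn, (mul_assoc w (star n) n).symm⟩, ?_⟩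
        have := hN w hw n hn n hn
        rwa [mul_assoc] at this
      | add x y hx hy ihx ihy =>
        intro w hw
        rw [mul_add]
        exact ⟨Submodule.add_mem _ (ihx w hw).1 (ihy w hw).1,
          Submodule.add_mem _ (ihx w hw).2 (ihy w hw).2⟩
      | zero =>
        intro w hw
        rw [mul_zero]
        exact ⟨Submodule.zero_mem _, Submodule.zero_mem _⟩
      | mul x y hx hy ihx ihy =>
        intro w hw
        rw [← mul_assoc]
        exact ihy (w * x) (ihx w hw).2
      | smul r x hx ihx =>
        intro w hw
        rw [mul_smul_comm]
        exact ⟨Submodule.smul_of_tower_mem _ r (ihx w hw).1,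
          Submodule.smul_of_tower_mem _ r (ihx w hw).2⟩
    -- the image of the non-unital CFC lands in the closure of that algebra
    have L3 : ∀ f : C(quasispectrum ℝ a, ℝ)₀,
        cfcₙHom ha f ∈ (NonUnitalAlgebra.adjoin ℝ {a}).topologicalClosure := by
      intro f
      refine ContinuousMapZero.induction_on
        (p := fun f => cfcₙHom ha f ∈ (NonUnitalAlgebra.adjoin ℝ {a}).topologicalClosure)
        ?_ ?_ ?_ ?_ ?_ ?_ ?_ f
      · rw [map_zero]; exact zero_mem _
      · rw [show cfcₙHom ha (ContinuousMapZero.id (quasispectrum ℝ a)) = a from cfcₙHom_id ha]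
        exact (NonUnitalAlgebra.adjoin ℝ {a}).le_topologicalClosure
          (NonUnitalAlgebra.subset_adjoin ℝ rfl)
      · rw [map_star, show cfcₙHom ha (ContinuousMapZero.id (quasispectrum ℝ a)) = a from cfcₙHom_id ha,
          ha.star_eq]
        exact (NonUnitalAlgebra.adjoin ℝ {a}).le_topologicalClosure
          (NonUnitalAlgebra.subset_adjoin ℝ rfl)
      · intro f g hf hg; rw [map_add]; exact add_mem hf hg
      · intro f g hf hg; rw [map_mul]; exact mul_mem hf hg
      · intro r f hf; rw [map_smul]; exact SMulMemClass.smul_mem r hf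
      · intro h f
        have hdense := ContinuousMapZero.adjoin_id_dense (quasispectrum ℝ a)
        have hf : f ∈ closure (NonUnitalStarAlgebra.adjoin ℝ
            {(ContinuousMapZero.id (quasispectrum ℝ a) : C(quasispectrum ℝ a, ℝ)₀)} : Set _) := hdense f
        have hmap := map_mem_closure (cfcₙHom_continuous ha) hf (fun g hg => h g hg)
        rwa [IsClosed.closure_eq] at hmap
        exact (NonUnitalAlgebra.adjoin ℝ {a}).isClosed_topologicalClosure
    -- main approximation
    rw [← closure_closure (s := (Submodule.span ℂ S : Set B)), Metric.mem_closure_iff]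
    intro δ hδ
    set ε : ℝ := δ ^ 2 / 2 with hε'
    have hε : 0 < ε := by positivity
    set g : ℝ → ℝ := fun t => t * (|t| + ε)⁻¹ with hg'
    have hgc : Continuous g :=
      continuous_id'.mul ((continuous_abs.add continuous_const).inv₀ fun t => (add_pos_of_nonneg_of_pos (abs_nonneg t) hε).ne')
    have hg0 : g 0 = 0 := by simp [hg']
    set c : B := cfcₙ g a with hc
    have hsa_c : IsSelfAdjoint c := cfcₙ_predicate g a
    -- membership
    have hcM : c ∈ closure ((NonUnitalAlgebra.adjoin ℝ {a} : NonUnitalSubalgebra ℝ B) : Set B) := by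
      rw [hc, cfcₙ_apply g a hgc.continuousOn hg0 ha]
      exact L3 _
    have hnc : n * c ∈ closure (Submodule.span ℂ S : Set B) :=
      map_mem_closure (continuous_mul_left n) hcM (fun y hy => (L2 y hy n hn).1)
    -- norm estimate
    have h1 : cfcₙ (fun t : ℝ => t * g t) a = a * c := by
      rw [cfcₙ_mul (fun t : ℝ => t) g a continuous_id.continuousOn rfl hgc.continuousOn hg0,
        cfcₙ_id' ℝ a]
    have h2 : cfcₙ (fun t : ℝ => g t * t) a = c * a := by
      rw [cfcₙ_mul g (fun t : ℝ => t) a hgc.continuousOn hg0 continuous_id.continuousOn rfl,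
        cfcₙ_id' ℝ a]
    have h3 : cfcₙ (fun t : ℝ => g t * (t * g t)) a = c * (a * c) := by
      rw [cfcₙ_mul g (fun t : ℝ => t * g t) a hgc.continuousOn hg0
        (continuous_id.mul hgc).continuousOn (by simp [hg0]), h1]
    have h4 : cfcₙ (fun t : ℝ => g t * (t * g t) - g t * t) a = c * (a * c) - c * a := by
      rw [cfcₙ_sub (fun t : ℝ => g t * (t * g t)) (fun t : ℝ => g t * t) a
        (hgc.mul (continuous_id.mul hgc)).continuousOn (by simp [hg0])
        (hgc.mul continuous_id).continuousOn (by simp [hg0]), h3, h2]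
    have h5 : cfcₙ (fun t : ℝ => t * g t - t) a = a * c - a := by
      rw [cfcₙ_sub (fun t : ℝ => t * g t) (fun t : ℝ => t) a
        (continuous_id.mul hgc).continuousOn (by simp [hg0])
        continuous_id.continuousOn rfl, h1, cfcₙ_id' ℝ a]
    set F : ℝ → ℝ := fun t => (g t * (t * g t) - g t * t) - (t * g t - t) with hF'
    have h6 : cfcₙ F a = (c * (a * c) - c * a) - (a * c - a) := by
      rw [hF', cfcₙ_sub (fun t : ℝ => g t * (t * g t) - g t * t) (fun t : ℝ => t * g t - t) a
        ((hgc.mul (continuous_id.mul hgc)).sub (hgc.mul continuous_id)).continuousOn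
        (by simp [hg0])
        ((continuous_id.mul hgc).sub continuous_id).continuousOn (by simp [hg0]), h4, h5]
    have hx_eq : star (n * c - n) * (n * c - n) = cfcₙ F a := by
      rw [h6, star_sub, star_mul, hsa_c.star_eq, hA]
      noncomm_ring
    have hbound : ∀ x ∈ quasispectrum ℝ a, ‖F x‖ ≤ ε := by
      intro x hx
      have hx0 : 0 ≤ x := hqs x hx
      have hd : 0 < x + ε := by positivity
      have hFx : F x = x * ε ^ 2 / (x + ε) ^ 2 := by
        simp only [hF', hg', abs_of_nonneg hx0]
        field_simp
        ring
      rw [Real.norm_eq_abs, hFx, abs_of_nonneg (by positivity), div_le_iff₀ (by positivity)]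
      nlinarith [sq_nonneg x, sq_nonneg ε, mul_nonneg hx0 hε.le]
    have hnorm : ‖cfcₙ F a‖ ≤ ε := norm_cfcₙ_le hbound
    have hsq : ‖n * c - n‖ * ‖n * c - n‖ ≤ ε := by
      rw [← CStarRing.norm_star_mul_self, hx_eq]
      exact hnorm
    rw [hε'] at hsq
    refine ⟨n * c, hnc, ?_⟩
    rw [dist_eq_norm, ← norm_sub_rev]
    nlinarith [norm_nonneg (n * c - n), hδ]
  · refine closure_minimal (SetLike.coe_subset_coe.mpr <| Submodule.span_le.mpr ?_) hNc
    rintro x ⟨u, hu, m, hm, p, hp, rfl⟩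
    exact hN u hu m hm p hp
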